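/- Let $M_p$ satisfy (M.1) and $M_p/C^p\to\infty$ for all $C>0$, with associated function $M(\rho)=\sup_p \ln_+(\rho^p/M_p)$. For every sequence $(r_p)$ of positive numbers monotonically increasing to infinity and every $k>0$, there exists $\rho_0>0$ such that $N_{r_p}(\rho)\le M(k\rho)$ for all $\rho>\rho_0$, where $N_{r_p}(\rho)=\sup_p \ln_+\big(\rho^p/(M_p\prod_{j=1}^p r_j)\big)$. -/
import Mathlib

open Filter Finset

/-- The associated function `M(ρ) = sup_p ln₊(ρ^p / M_p)`. -/
noncomputable def assocFn (M : ℕ → ℝ) (ρ : ℝ) : ℝ :=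
  ⨆ p : ℕ, max (Real.log (ρ ^ p / M p)) 0

/-- For `M_p` positive, `M_0 = 1`, log-convex, with `M_p/C^p → ∞` for all
`C > 0`, and any positive sequence `(r_p)` monotonically increasing to infinity and any
`k > 0`, there exists `ρ₀ > 0` such that `N_{r_p}(ρ) ≤ M(kρ)` for all `ρ > ρ₀`, where
`N_{r_p}(ρ) = sup_p ln₊(ρ^p/(M_p ∏_{j=1}^p r_j))`. -/
theorem stmt11 (M : ℕ → ℝ) (hMpos : ∀ p, 0 < M p) (hM0 : M 0 = 1)
    (hM1 : ∀ p : ℕ, 1 ≤ p → (M p) ^ 2 ≤ M (p - 1) * M (p + 1))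
    (hMgrow : ∀ C : ℝ, 0 < C → Tendsto (fun p : ℕ => M p / C ^ p) atTop atTop)
    (r : ℕ → ℝ) (hrpos : ∀ p, 0 < r p) (hrmono : Monotone r)
    (hrtop : Tendsto r atTop atTop) (k : ℝ) (hk : 0 < k) :
    ∃ ρ₀ : ℝ, 0 < ρ₀ ∧ ∀ ρ : ℝ, ρ₀ < ρ →
      assocFn (fun p => M p * ∏ j ∈ Finset.Icc 1 p, r j) ρ ≤ assocFn M (k * ρ) := by
  -- notation
  set Pr : ℕ → ℝ := fun p => ∏ j ∈ Finset.Icc 1 p, r j with hPr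
  have hPrpos : ∀ p, 0 < Pr p := fun p => Finset.prod_pos (fun j _ => hrpos j)
  set g : ℕ → ℝ := fun p => k ^ p * Pr p with hg
  have hgpos : ∀ p, 0 < g p := fun p => mul_pos (pow_pos hk p) (hPrpos p)
  have hPrsucc : ∀ p, Pr (p + 1) = Pr p * r (p + 1) := fun p =>
    Finset.prod_Icc_succ_top (Nat.le_add_left 1 p) r
  have hgsucc : ∀ p, g (p + 1) = g p * (k * r (p + 1)) := by
    intro p
    simp only [hg, hPrsucc, pow_succ]
    ring
  -- find j₀ with factors ≥ 2 beyond j₀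
  obtain ⟨j₀, hj₀⟩ := (Filter.tendsto_atTop.mp (hrtop.const_mul_atTop hk) 2).exists_forall_of_atTop
  -- growth of g
  have hgrow : ∀ n : ℕ, g j₀ * 2 ^ n ≤ g (j₀ + n) := by
    intro n
    induction n with
    | zero => simp
    | succ n ih =>
      have h2 : 2 ≤ k * r (j₀ + n + 1) := hj₀ _ (by omega)
      calc g j₀ * 2 ^ (n + 1) = (g j₀ * 2 ^ n) * 2 := by ring
        _ ≤ g (j₀ + n) * 2 := by nlinarith
        _ ≤ g (j₀ + n) * (k * r (j₀ + n + 1)) := by nlinarith [hgpos (j₀ + n)]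
        _ = g (j₀ + n + 1) := (hgsucc _).symm
  have hgmono : ∀ p q : ℕ, j₀ ≤ p → p ≤ q → g p ≤ g q := by
    intro p q hp hpq
    induction q, hpq using Nat.le_induction with
    | base => exact le_refl _
    | succ q hpq ih =>
      have h2 : 2 ≤ k * r (q + 1) := hj₀ _ (by omega)
      calc g p ≤ g q := ih
        _ ≤ g q * (k * r (q + 1)) := by nlinarith [hgpos q]
        _ = g (q + 1) := (hgsucc q).symm
  obtain ⟨n, hn⟩ := pow_unbounded_of_one_lt (1 / g j₀) (one_lt_two (α := ℝ))
  set p₁ := j₀ + n with hp₁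
  have hg1 : ∀ p, p₁ ≤ p → 1 ≤ g p := by
    intro p hp
    have h1 : 1 ≤ g j₀ * 2 ^ n := by
      rw [div_lt_iff₀ (hgpos j₀)] at hn
      nlinarith [hgpos j₀]
    calc (1 : ℝ) ≤ g j₀ * 2 ^ n := h1
      _ ≤ g p₁ := hgrow n
      _ ≤ g p := hgmono p₁ p (Nat.le_add_right _ _) hp
  set q := p₁ + 1 with hq
  set A : ℝ := (∑ p ∈ Finset.range p₁, 1 / (M p * Pr p)) + 1 with hA
  have hMPrpos : ∀ p, 0 < M p * Pr p := fun p => mul_pos (hMpos p) (hPrpos p)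
  have hApos : 0 < A := by
    have h : ∀ p ∈ Finset.range p₁, (0:ℝ) ≤ 1 / (M p * Pr p) :=
      fun p _ => (one_div_pos.mpr (hMPrpos p)).le
    have h2 := Finset.sum_nonneg h
    rw [hA]
    linarith
  have hAle : ∀ p, p < p₁ → 1 / (M p * Pr p) ≤ A := by
    intro p hp
    have := Finset.single_le_sum (f := fun p => 1 / (M p * Pr p))
      (fun i _ => (one_div_pos.mpr (hMPrpos i)).le) (Finset.mem_range.mpr hp)
    simp only [hA]; linarith
  refine ⟨max 1 (A * M q / k ^ q), lt_max_of_lt_left one_pos, fun ρ hρ => ?_⟩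
  have hρ1 : 1 < ρ := lt_of_le_of_lt (le_max_left _ _) hρ
  have hρ0 : 0 < ρ := by linarith
  have hρ2 : A * M q / k ^ q < ρ := lt_of_le_of_lt (le_max_right _ _) hρ
  have hkρ : 0 < k * ρ := mul_pos hk hρ0
  -- boundedness of the RHS family
  have hbdd : BddAbove (Set.range fun p : ℕ => max (Real.log ((k * ρ) ^ p / M p)) 0) := by
    have h1 := (Filter.tendsto_atTop.mp (hMgrow (k * ρ) hkρ) 1)
    have h2 : (fun p : ℕ => max (Real.log ((k * ρ) ^ p / M p)) 0) =ᶠ[atTop]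
        (fun _ => (0 : ℝ)) := by
      filter_upwards [h1] with p hp
      have hle : (k * ρ) ^ p / M p ≤ 1 := by
        rw [div_le_one (hMpos p)]
        rw [le_div_iff₀ (pow_pos hkρ p)] at hp
        linarith
      have hlog : Real.log ((k * ρ) ^ p / M p) ≤ 0 :=
        Real.log_nonpos (div_pos (pow_pos hkρ p) (hMpos p)).le hle
      exact max_eq_right hlog
    exact (tendsto_const_nhds.congr' h2.symm).bddAbove_range
  have hterm : ∀ p : ℕ, max (Real.log ((k * ρ) ^ p / M p)) 0 ≤ assocFn M (k * ρ) :=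
    fun p => le_ciSup hbdd p
  -- main estimate
  rw [assocFn]
  apply ciSup_le
  intro p
  rcases le_or_gt p₁ p with hple | hplt
  · -- large p: compare with the p-th term on the right
    refine le_trans ?_ (hterm p)
    apply max_le_max _ le_rfl
    apply Real.log_le_log (div_pos (pow_pos hρ0 p) (hMPrpos p))
    rw [div_le_div_iff₀ (hMPrpos p) (hMpos p)]
    have h1 : 1 ≤ g p := hg1 p hple
    calc ρ ^ p * M p = 1 * (ρ ^ p * M p) := by ring
      _ ≤ g p * (ρ ^ p * M p) :=
        mul_le_mul_of_nonneg_right h1 (mul_pos (pow_pos hρ0 p) (hMpos p)).le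
      _ = (k * ρ) ^ p * (M p * Pr p) := by rw [mul_pow]; simp only [hg]; ring
  · -- small p: compare with the q-th term on the right
    refine le_trans ?_ (hterm q)
    apply max_le_max _ le_rfl
    apply Real.log_le_log (div_pos (pow_pos hρ0 p) (hMPrpos p))
    have step1 : ρ ^ p / (M p * Pr p) ≤ ρ ^ p₁ * A := by
      rw [div_eq_mul_one_div]
      exact mul_le_mul (pow_le_pow_right₀ hρ1.le hplt.le)
        (hAle p hplt) (one_div_pos.mpr (hMPrpos p)).le (by positivity)
    have step2 : ρ ^ p₁ * A ≤ (k * ρ) ^ q / M q := by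
      rw [le_div_iff₀ (hMpos q), mul_pow, hq, pow_succ]
      have hk' : A * M q / k ^ q < ρ := hρ2
      rw [div_lt_iff₀ (pow_pos hk q)] at hk'
      calc ρ ^ p₁ * A * M q ≤ ρ ^ p₁ * (ρ * k ^ (p₁+1)) := by
            nlinarith [pow_pos hρ0 p₁]
        _ = k ^ p₁ * k * ρ ^ (p₁ + 1) := by ring
    exact le_trans step1 step2
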